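/- arXiv:2011.10332 — 4 statements merged into one kernel-verified Lean document; each statement's English description precedes it below -/
import Mathlib

section
/- Let p > 1, c < 1/4, and ω ≤ 0. Then the equation φ'' + (c/x²)φ − ωφ + |φ|^{p−1}φ = 0 has no nontrivial solution in H¹₀(0,∞). Equivalently, any nontrivial solution requires ω > 0, since combining the two identities gives ω‖φ‖²_{L²} = ((p+3)/(2(p+1)))‖φ‖^{p+1}_{L^{p+1}} > 0. -/
open MeasureTheory Set

/-- **No nontrivial standing waves for `ω ≤ 0`.** If `φ ∈ H¹₀(0,∞)` satisfies both the
Nehari identity `‖φ'‖² − c‖φ/x‖² + ω‖φ‖² − ‖φ‖_{L^{p+1}}^{p+1} = 0` and the Pohozaev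
identity `‖φ'‖² − c‖φ/x‖² − ((p−1)/(2(p+1)))‖φ‖_{L^{p+1}}^{p+1} = 0`, and `φ` is
nontrivial (its `L^{p+1}` norm is positive), then `ω ≤ 0` is impossible:
indeed `ω‖φ‖² = ((p+3)/(2(p+1)))‖φ‖_{L^{p+1}}^{p+1} > 0`. -/
theorem no_nontrivial_solution_nonpositive_omega (p ω c : ℝ) (hp : 1 < p) (hc : c < 1/4)
    (hω : ω ≤ 0) (φ : ℝ → ℂ)
    (hnehari : (∫ x in Ioi (0:ℝ), ‖deriv φ x‖^2) - c * (∫ x in Ioi (0:ℝ), ‖φ x‖^2 / x^2)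
      + ω * (∫ x in Ioi (0:ℝ), ‖φ x‖^2) - (∫ x in Ioi (0:ℝ), ‖φ x‖ ^ (p+1)) = 0)
    (hpohozaev : (∫ x in Ioi (0:ℝ), ‖deriv φ x‖^2) - c * (∫ x in Ioi (0:ℝ), ‖φ x‖^2 / x^2)
      - ((p-1) / (2*(p+1))) * (∫ x in Ioi (0:ℝ), ‖φ x‖ ^ (p+1)) = 0)
    (hnontrivial : 0 < ∫ x in Ioi (0:ℝ), ‖φ x‖ ^ (p+1)) :
    False := by
  set K := (∫ x in Ioi (0:ℝ), ‖deriv φ x‖^2) - c * (∫ x in Ioi (0:ℝ), ‖φ x‖^2 / x^2) with hK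
  set M := ∫ x in Ioi (0:ℝ), ‖φ x‖^2 with hM
  set L := ∫ x in Ioi (0:ℝ), ‖φ x‖ ^ (p+1) with hL
  have hM0 : 0 ≤ M := integral_nonneg fun x => sq_nonneg _
  have hωM : ω * M ≤ 0 := mul_nonpos_of_nonpos_of_nonneg hω hM0
  have hωM' : ω * M = (p+3) / (2*(p+1)) * L := by
    have hp1 : (2*(p+1)) ≠ 0 := by nlinarith
    have h1 : K = (p-1) / (2*(p+1)) * L := by linarith
    have h2 : ω * M = L - K := by linarith
    rw [h2, h1]
    field_simp
    ring
  have : 0 < (p+3) / (2*(p+1)) * L := by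
    apply mul_pos _ hnontrivial
    apply div_pos <;> nlinarith
  linarith
end

section
/- Let ω > 0, p > 1, q the exponentially decaying soliton, and ψ_A(x) = q(x+A) − q(x−A) for x ≥ 0. Then ψ_A ∈ H¹₀(0,∞), and ∫₀^∞ |ψ_A|^{p+1} dx = ∫_{−∞}^∞ |q|^{p+1} dx + O(e^{−2√ω A}) as A → ∞. -/
open MeasureTheory Set

lemma aux_mvt {r s t : ℝ} (hr : 1 ≤ r) (hs : 0 ≤ s) (hst : s ≤ t) :
    t ^ r - s ^ r ≤ r * t ^ (r - 1) * (t - s) := by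
  rcases eq_or_lt_of_le (hs.trans hst) with ht | ht
  · have hs0 : s = 0 := le_antisymm (hst.trans ht.symm.le) hs
    have ht0 : t = 0 := ht.symm
    simp [hs0, ht0, Real.zero_rpow (show r ≠ 0 by linarith)]
  · have hx1 : -1 ≤ s / t - 1 := by
      have : 0 ≤ s / t := div_nonneg hs ht.le
      linarith
    have hb := one_add_mul_self_le_rpow_one_add hx1 hr
    rw [add_sub_cancel] at hb
    rw [Real.div_rpow hs ht.le r] at hb
    have htr : 0 < t ^ r := Real.rpow_pos_of_pos ht r
    have h2 : (1 + r * (s / t - 1)) * t ^ r ≤ s ^ r := (le_div_iff₀ htr).mp hb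
    have h3 : t ^ r = t ^ (r - 1) * t := by
      rw [← Real.rpow_add_one (ne_of_gt ht), sub_add_cancel]
    have h4 : s / t * t ^ r = s * t ^ (r - 1) := by
      rw [h3]; field_simp
    have h2' : t ^ r + r * (s * t ^ (r-1)) - r * t ^ r ≤ s ^ r := by
      have he : (1 + r * (s / t - 1)) * t ^ r = t ^ r + r * (s / t * t ^ r) - r * t ^ r := by
        ring
      rw [he, h4] at h2; linarith
    calc t ^ r - s ^ r ≤ r * t ^ r - r * (s * t ^ (r-1)) := by linarith
      _ = r * t ^ (r-1) * (t - s) := by rw [h3]; ring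

lemma aux_abs {r u v : ℝ} (hr : 1 ≤ r) (hu : 0 ≤ u) (hv : 0 ≤ v) :
    |u ^ r - v ^ r| ≤ r * (max u v) ^ (r - 1) * |u - v| := by
  rcases le_total u v with h | h
  · rw [abs_of_nonpos (by
      have := Real.rpow_le_rpow hu h (by linarith : (0:ℝ) ≤ r); linarith),
      abs_of_nonpos (by linarith), max_eq_right h, neg_sub, neg_sub]
    exact aux_mvt hr hu h
  · rw [abs_of_nonneg (by
      have := Real.rpow_le_rpow hv h (by linarith : (0:ℝ) ≤ r); linarith),
      abs_of_nonneg (by linarith), max_eq_left h]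
    exact aux_mvt hr hv h

lemma aux_ind_Ioi (f : ℝ → ℝ) (a A : ℝ) :
    ∫ x in Ioi a, f (x - A) = ∫ x in Ioi (a - A), f x := by
  rw [← integral_indicator measurableSet_Ioi, ← integral_indicator measurableSet_Ioi]
  have h : (Ioi a).indicator (fun x => f (x - A)) =
      fun x => (Ioi (a - A)).indicator f (x - A) := by
    funext x
    simp only [indicator_apply, mem_Ioi, sub_lt_sub_iff_right]
  rw [h, integral_sub_right_eq_self (fun x => (Ioi (a - A)).indicator f x) A]

lemma aux_ind_Iic (f : ℝ → ℝ) (a A : ℝ) :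
    ∫ x in Iic a, f (x - A) = ∫ x in Iic (a - A), f x := by
  rw [← integral_indicator measurableSet_Iic, ← integral_indicator measurableSet_Iic]
  have h : (Iic a).indicator (fun x => f (x - A)) =
      fun x => (Iic (a - A)).indicator f (x - A) := by
    funext x
    simp only [indicator_apply, mem_Iic, sub_le_sub_iff_right]
  rw [h, integral_sub_right_eq_self (fun x => (Iic (a - A)).indicator f x) A]

lemma aux_exp_Iic {c : ℝ} (hc : 0 < c) :
    IntegrableOn (fun x : ℝ => Real.exp (c * x)) (Iic (0:ℝ)) := by
  have h0 : Integrable ((Ioi (0:ℝ)).indicator (fun x => Real.exp (-c * x))) := by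
    rw [integrable_indicator_iff measurableSet_Ioi]
    exact exp_neg_integrableOn_Ioi 0 hc
  have h1 := h0.comp_neg
  have h2 : (fun x : ℝ => (Ioi (0:ℝ)).indicator (fun y => Real.exp (-c * y)) (-x)) =
      (Iio (0:ℝ)).indicator (fun x => Real.exp (c * x)) := by
    funext x
    by_cases hx : x < 0
    · rw [indicator_of_mem (by simpa using hx : -x ∈ Ioi (0:ℝ)),
        indicator_of_mem (mem_Iio.mpr hx)]
      ring_nf
    · rw [indicator_of_notMem (by simpa using hx), indicator_of_notMem (by simpa using hx)]
  rw [h2, integrable_indicator_iff measurableSet_Iio] at h1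
  rw [integrableOn_Iic_iff_integrableOn_Iio]
  exact h1

lemma aux_exp_abs {c : ℝ} (hc : 0 < c) :
    Integrable (fun x : ℝ => Real.exp (-(c * |x|))) := by
  rw [← integrableOn_univ, ← Iic_union_Ioi (a := (0:ℝ))]
  refine IntegrableOn.union ?_ ?_
  · refine (aux_exp_Iic hc).congr_fun (fun x hx => ?_) measurableSet_Iic
    have := mem_Iic.mp hx
    simp only [abs_of_nonpos this, mul_neg, neg_neg]
  · refine (exp_neg_integrableOn_Ioi 0 hc).congr_fun (fun x hx => ?_) measurableSet_Ioi
    have := (mem_Ioi.mp hx).le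
    simp only [abs_of_nonneg this, neg_mul]

lemma aux_pow_decay {M c rr y t : ℝ} (hM : 0 ≤ M) (hrr : 0 ≤ rr)
    (hy0 : 0 ≤ y) (hy : y ≤ M * Real.exp (-(c * t))) :
    y ^ rr ≤ M ^ rr * Real.exp (-(rr * c * t)) := by
  have h1 := Real.rpow_le_rpow hy0 hy hrr
  rwa [Real.mul_rpow hM (Real.exp_pos _).le, ← Real.exp_mul,
    show -(c * t) * rr = -(rr * c * t) by ring] at h1

lemma aux_memL2 {f : ℝ → ℝ} (hf : Continuous f) {K c : ℝ} (hc : 0 < c)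
    (hbound : ∀ x > 0, |f x| ≤ K * Real.exp (-c * x)) :
    MemLp f 2 (volume.restrict (Ioi (0:ℝ))) := by
  rw [memLp_two_iff_integrable_sq hf.aestronglyMeasurable.restrict]
  have hg : IntegrableOn (fun x : ℝ => K ^ 2 * Real.exp (-(2 * c) * x)) (Ioi 0) :=
    (exp_neg_integrableOn_Ioi 0 (by linarith)).const_mul _
  refine hg.integrable.mono' ((hf.pow 2).aestronglyMeasurable.restrict) ?_
  rw [ae_restrict_iff' measurableSet_Ioi]
  filter_upwards with x hx
  have hb := hbound x (mem_Ioi.mp hx)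
  have h1 : ‖f x ^ 2‖ = |f x| ^ 2 := by
    rw [Real.norm_eq_abs, abs_pow]
  rw [h1]
  have h2 : |f x| ^ 2 ≤ (K * Real.exp (-c * x)) ^ 2 :=
    pow_le_pow_left₀ (abs_nonneg _) hb 2
  calc |f x| ^ 2 ≤ (K * Real.exp (-c * x)) ^ 2 := h2
    _ = K ^ 2 * Real.exp (-(2 * c) * x) := by
        rw [mul_pow, sq (Real.exp _), ← Real.exp_add]; ring_nf

set_option maxHeartbeats 1000000 in
/-- **`L^{p+1}` approximation by cut soliton differences.** Let `q` be the even, positive,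
exponentially decaying soliton solving `q'' − ωq + q^p = 0` and
`ψ_A(x) = q(x+A) − q(x−A)`. Then `ψ_A ∈ H¹₀(0,∞)` (it vanishes at `0` and is `H¹` on
`(0,∞)`), and `∫₀^∞ |ψ_A|^{p+1} = ∫_ℝ |q|^{p+1} + O(e^{−2√ω A})` as `A → ∞`. -/
theorem psiA_Lp_estimate (p ω : ℝ) (hp : 1 < p) (hω : 0 < ω)
    (q : ℝ → ℝ) (M : ℝ) (hM : 0 < M)
    (hq_even : ∀ x, q (-x) = q x) (hq_pos : ∀ x, 0 < q x)
    (hq_smooth : ContDiff ℝ 2 q)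
    (hq_eq : ∀ x, deriv (deriv q) x - ω * q x + (q x) ^ p = 0)
    (hq_decay : ∀ x, q x ≤ M * Real.exp (-(Real.sqrt ω) * |x|))
    (hq'_decay : ∀ x, |deriv q x| ≤ M * Real.exp (-(Real.sqrt ω) * |x|)) :
    (∀ A : ℝ, (fun x => q (x + A) - q (x - A)) 0 = 0 ∧
      MemLp (fun x => q (x + A) - q (x - A)) 2 (volume.restrict (Ioi (0:ℝ))) ∧
      MemLp (deriv (fun x => q (x + A) - q (x - A))) 2 (volume.restrict (Ioi (0:ℝ)))) ∧
    ∃ C A₀ : ℝ, 0 < C ∧ 0 < A₀ ∧ ∀ A ≥ A₀,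
      |(∫ x in Ioi (0:ℝ), |q (x + A) - q (x - A)| ^ (p+1)) - ∫ x : ℝ, (q x) ^ (p+1)|
        ≤ C * Real.exp (-2 * Real.sqrt ω * A) := by
  have hc : 0 < Real.sqrt ω := Real.sqrt_pos.mpr hω
  set c := Real.sqrt ω with hcdef
  have hqc : Continuous q := hq_smooth.continuous
  have hdq : Differentiable ℝ q := hq_smooth.differentiable (by norm_num)
  have hq'c : Continuous (deriv q) := hq_smooth.continuous_deriv one_le_two
  -- generic translated decay bound
  have hshift : ∀ (B x : ℝ), 0 < x → Real.exp (-c * |x + B|) ≤ Real.exp (c * |B|) * Real.exp (-c * x) := by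
    intro B x hx
    rw [← Real.exp_add]
    apply Real.exp_le_exp.mpr
    have h1 : |x| - |-B| ≤ |x - -B| := abs_sub_abs_le_abs_sub x (-B)
    rw [sub_neg_eq_add, abs_neg, abs_of_pos hx] at h1
    nlinarith [hc.le]
  constructor
  · intro A
    refine ⟨by simp [hq_even], ?_, ?_⟩
    · apply aux_memL2 (hqc.comp (by continuity) |>.sub (hqc.comp (by continuity)))
        (K := 2 * M * Real.exp (c * |A|)) hc
      intro x hx
      have hs1 := hshift A x hx
      have hs2 := hshift (-A) x hx
      rw [abs_neg] at hs2
      simp only [← sub_eq_add_neg] at hs2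
      have h1 : q (x + A) ≤ M * Real.exp (c * |A|) * Real.exp (-c * x) := by
        calc q (x + A) ≤ M * Real.exp (-c * |x + A|) := hq_decay _
          _ ≤ M * (Real.exp (c * |A|) * Real.exp (-c * x)) :=
              mul_le_mul_of_nonneg_left hs1 hM.le
          _ = M * Real.exp (c * |A|) * Real.exp (-c * x) := (mul_assoc _ _ _).symm
      have h2 : q (x - A) ≤ M * Real.exp (c * |A|) * Real.exp (-c * x) := by
        calc q (x - A) ≤ M * Real.exp (-c * |x - A|) := hq_decay _
          _ ≤ M * (Real.exp (c * |A|) * Real.exp (-c * x)) :=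
              mul_le_mul_of_nonneg_left hs2 hM.le
          _ = M * Real.exp (c * |A|) * Real.exp (-c * x) := (mul_assoc _ _ _).symm
      have h3 : |q (x + A) - q (x - A)| ≤ q (x + A) + q (x - A) := by
        have := hq_pos (x + A); have := hq_pos (x - A)
        rw [abs_sub_le_iff]; constructor <;> linarith
      calc |q (x + A) - q (x - A)| ≤ q (x + A) + q (x - A) := h3
        _ ≤ 2 * M * Real.exp (c * |A|) * Real.exp (-c * x) := by linarith
    · have hde : deriv (fun x => q (x + A) - q (x - A)) =
          fun x => deriv q (x + A) - deriv q (x - A) := by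
        funext x
        have h1 : HasDerivAt (fun x => q (x + A)) (deriv q (x + A)) x := by
          simpa [Function.comp_def] using (hdq (x + A)).hasDerivAt.comp x ((hasDerivAt_id x).add_const A)
        have h2 : HasDerivAt (fun x => q (x - A)) (deriv q (x - A)) x := by
          simpa [Function.comp_def] using (hdq (x - A)).hasDerivAt.comp x ((hasDerivAt_id x).sub_const A)
        exact (h1.sub h2).deriv
      rw [hde]
      apply aux_memL2 ((hq'c.comp (by continuity)).sub (hq'c.comp (by continuity)))
        (K := 2 * M * Real.exp (c * |A|)) hc
      intro x hx
      have hs1 := hshift A x hx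
      have hs2 := hshift (-A) x hx
      rw [abs_neg] at hs2
      simp only [← sub_eq_add_neg] at hs2
      have h1 : |deriv q (x + A)| ≤ M * Real.exp (c * |A|) * Real.exp (-c * x) := by
        calc |deriv q (x + A)| ≤ M * Real.exp (-c * |x + A|) := hq'_decay _
          _ ≤ M * (Real.exp (c * |A|) * Real.exp (-c * x)) :=
              mul_le_mul_of_nonneg_left hs1 hM.le
          _ = M * Real.exp (c * |A|) * Real.exp (-c * x) := (mul_assoc _ _ _).symm
      have h2 : |deriv q (x - A)| ≤ M * Real.exp (c * |A|) * Real.exp (-c * x) := by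
        calc |deriv q (x - A)| ≤ M * Real.exp (-c * |x - A|) := hq'_decay _
          _ ≤ M * (Real.exp (c * |A|) * Real.exp (-c * x)) :=
              mul_le_mul_of_nonneg_left hs2 hM.le
          _ = M * Real.exp (c * |A|) * Real.exp (-c * x) := (mul_assoc _ _ _).symm
      calc |deriv q (x + A) - deriv q (x - A)| ≤ |deriv q (x + A)| + |deriv q (x - A)| :=
            abs_sub _ _
        _ ≤ 2 * M * Real.exp (c * |A|) * Real.exp (-c * x) := by linarith
  · -- Part 2: the integral estimate
    have hp0 : (0:ℝ) ≤ p := by linarith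
    have hr1 : (1:ℝ) ≤ p + 1 := by linarith
    have hr0 : (0:ℝ) ≤ p + 1 := by linarith
    have hb1 : (0:ℝ) < (p + 1) * c := by positivity
    have hb2 : (0:ℝ) < (p - 1) * c := by
      have : (0:ℝ) < p - 1 := by linarith
      positivity
    have hq_decay' : ∀ x, q x ≤ M * Real.exp (-(c * |x|)) := by
      intro x; simpa [neg_mul] using hq_decay x
    have hq_rpow_cont : Continuous (fun x => q x ^ (p + 1)) :=
      hqc.rpow_const (fun x => Or.inl (ne_of_gt (hq_pos x)))
    have hq_int : Integrable (fun x => q x ^ (p + 1)) := by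
      refine ((aux_exp_abs hb1).const_mul (M ^ (p + 1))).mono'
        hq_rpow_cont.aestronglyMeasurable ?_
      filter_upwards with x
      rw [Real.norm_eq_abs, abs_of_nonneg (Real.rpow_nonneg (hq_pos x).le _)]
      exact aux_pow_decay hM.le hr0 (hq_pos x).le (hq_decay' x)
    have hcI : 0 ≤ ∫ x in Iic (0:ℝ), Real.exp ((p + 1) * c * x) :=
      setIntegral_nonneg measurableSet_Iic (fun x _ => (Real.exp_pos _).le)
    have hcJ : 0 ≤ ∫ x : ℝ, Real.exp (-((p - 1) * c * |x|)) :=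
      integral_nonneg (fun x => (Real.exp_pos _).le)
    refine ⟨M ^ (p + 1) * (∫ x in Iic (0:ℝ), Real.exp ((p + 1) * c * x)) +
        (p + 1) * (2 * M) ^ p * M * (∫ x : ℝ, Real.exp (-((p - 1) * c * |x|))) + 1,
      1, by positivity, one_pos, ?_⟩
    intro A hA
    have hA0 : (0:ℝ) ≤ A := by linarith
    -- tail bound
    have exp_int : IntegrableOn (fun x : ℝ => Real.exp ((p + 1) * c * x)) (Iic (-A)) :=
      (aux_exp_Iic hb1).mono_set (Iic_subset_Iic.mpr (by linarith))
    have tail_nonneg : 0 ≤ ∫ x in Iic (-A), q x ^ (p + 1) :=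
      setIntegral_nonneg measurableSet_Iic (fun x _ => Real.rpow_nonneg (hq_pos x).le _)
    have tail_le : (∫ x in Iic (-A), q x ^ (p + 1)) ≤
        M ^ (p + 1) * (Real.exp (-((p + 1) * c * A)) *
          ∫ x in Iic (0:ℝ), Real.exp ((p + 1) * c * x)) := by
      have step : (∫ x in Iic (-A), q x ^ (p + 1)) ≤
          ∫ x in Iic (-A), M ^ (p + 1) * Real.exp ((p + 1) * c * x) := by
        refine setIntegral_mono_on hq_int.integrableOn (exp_int.const_mul _)
          measurableSet_Iic (fun x hx => ?_)
        have hx' : x ≤ -A := mem_Iic.mp hx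
        have h1 := aux_pow_decay hM.le hr0 (hq_pos x).le (hq_decay' x)
        have h2 : |x| = -x := abs_of_nonpos (by linarith)
        rw [h2, show -((p + 1) * c * -x) = (p + 1) * c * x by ring] at h1
        exact h1
      have trans := aux_ind_Iic (fun x => Real.exp ((p + 1) * c * x)) 0 A
      rw [zero_sub] at trans
      have expand : (∫ x in Iic (0:ℝ), Real.exp ((p + 1) * c * (x - A))) =
          Real.exp (-((p + 1) * c * A)) * ∫ x in Iic (0:ℝ), Real.exp ((p + 1) * c * x) := by
        rw [← integral_const_mul]
        refine integral_congr_ae (Filter.Eventually.of_forall fun x => ?_)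
        show Real.exp ((p + 1) * c * (x - A)) =
          Real.exp (-((p + 1) * c * A)) * Real.exp ((p + 1) * c * x)
        rw [← Real.exp_add, show -((p + 1) * c * A) + (p + 1) * c * x =
          (p + 1) * c * (x - A) by ring]
      rw [integral_const_mul] at step
      rw [← trans, expand] at step
      calc (∫ x in Iic (-A), q x ^ (p + 1)) ≤
          M ^ (p + 1) * (Real.exp (-((p + 1) * c * A)) *
            ∫ x in Iic (0:ℝ), Real.exp ((p + 1) * c * x)) := step
        _ = _ := rfl
    -- translation of the main term
    have hJtrans : (∫ x in Ioi (0:ℝ), q (x - A) ^ (p + 1)) =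
        ∫ x in Ioi (-A), q x ^ (p + 1) := by
      have := aux_ind_Ioi (fun y => q y ^ (p + 1)) 0 A
      rwa [zero_sub] at this
    have hsplit : (∫ x in Iic (-A), q x ^ (p + 1)) + (∫ x in Ioi (-A), q x ^ (p + 1)) =
        ∫ x : ℝ, q x ^ (p + 1) :=
      intervalIntegral.integral_Iic_add_Ioi hq_int.integrableOn hq_int.integrableOn
    -- integrability on Ioi 0
    have hg_int : IntegrableOn (fun x => q (x - A) ^ (p + 1)) (Ioi 0) :=
      (hq_int.comp_sub_right A).integrableOn
    have hpsi_cont : Continuous (fun x => |q (x + A) - q (x - A)| ^ (p + 1)) :=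
      (((hqc.comp (by continuity)).sub (hqc.comp (by continuity))).abs).rpow_const
        (fun x => Or.inr hr0)
    have hpsi_bound : ∀ x ∈ Ioi (0:ℝ),
        |q (x + A) - q (x - A)| ≤ 2 * M * Real.exp (-(c * |x - A|)) := by
      intro x hx
      have hx0 : (0:ℝ) < x := hx
      have hxA : |x - A| ≤ x + A := by
        rw [abs_le]; constructor <;> linarith
      have hxA2 : |x + A| = x + A := abs_of_nonneg (by linarith)
      have h1 : q (x - A) ≤ M * Real.exp (-(c * |x - A|)) := hq_decay' _
      have h2 : q (x + A) ≤ M * Real.exp (-(c * |x - A|)) := by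
        refine (hq_decay' _).trans ?_
        have : Real.exp (-(c * |x + A|)) ≤ Real.exp (-(c * |x - A|)) := by
          apply Real.exp_le_exp.mpr
          rw [hxA2]
          nlinarith [hc.le]
        nlinarith [hM.le]
      have h3 : |q (x + A) - q (x - A)| ≤ q (x + A) + q (x - A) := by
        have := hq_pos (x + A); have := hq_pos (x - A)
        rw [abs_sub_le_iff]; constructor <;> linarith
      nlinarith [h3]
    have hf_int : IntegrableOn (fun x => |q (x + A) - q (x - A)| ^ (p + 1)) (Ioi 0) := by
      refine Integrable.mono' (((aux_exp_abs hb1).comp_sub_right A).const_mul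
        ((2 * M) ^ (p + 1))).integrableOn hpsi_cont.aestronglyMeasurable.restrict ?_
      rw [ae_restrict_iff' measurableSet_Ioi]
      filter_upwards with x hx
      rw [Real.norm_eq_abs, abs_of_nonneg (Real.rpow_nonneg (abs_nonneg _) _)]
      exact aux_pow_decay (by positivity) hr0 (abs_nonneg _) (hpsi_bound x hx)
    -- pointwise key bound on the difference
    have key : ∀ x ∈ Ioi (0:ℝ),
        |(|q (x + A) - q (x - A)| ^ (p + 1)) - q (x - A) ^ (p + 1)| ≤
          (p + 1) * (2 * M) ^ p * M * Real.exp (-(2 * c * A)) *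
            Real.exp (-((p - 1) * c * |x - A|)) := by
      intro x hx
      have hx0 : (0:ℝ) < x := hx
      have ha : 0 < q (x - A) := hq_pos _
      have hbb : 0 < q (x + A) := hq_pos _
      have h1 := aux_abs (u := |q (x + A) - q (x - A)|) (v := q (x - A)) hr1
        (abs_nonneg _) ha.le
      rw [show p + 1 - 1 = p by ring] at h1
      have hmax : max |q (x + A) - q (x - A)| (q (x - A)) ≤ q (x - A) + q (x + A) := by
        apply max_le
        · rw [abs_sub_le_iff]; constructor <;> linarith
        · linarith
      have h2 : |(|q (x + A) - q (x - A)|) - q (x - A)| ≤ q (x + A) := by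
        have h3 := abs_abs_sub_abs_le_abs_sub (q (x + A) - q (x - A)) (-(q (x - A)))
        rw [abs_neg, abs_of_pos ha, sub_neg_eq_add, sub_add_cancel] at h3
        exact h3.trans_eq (abs_of_pos hbb)
      have hmaxpow : (max |q (x + A) - q (x - A)| (q (x - A))) ^ p ≤
          (q (x - A) + q (x + A)) ^ p :=
        Real.rpow_le_rpow (le_trans ha.le (le_max_right _ _)) hmax hp0
      have h4 : |(|q (x + A) - q (x - A)| ^ (p + 1)) - q (x - A) ^ (p + 1)| ≤
          (p + 1) * (q (x - A) + q (x + A)) ^ p * q (x + A) := by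
        calc |(|q (x + A) - q (x - A)| ^ (p + 1)) - q (x - A) ^ (p + 1)| ≤
            (p + 1) * (max |q (x + A) - q (x - A)| (q (x - A))) ^ p *
              |(|q (x + A) - q (x - A)|) - q (x - A)| := h1
          _ ≤ (p + 1) * (q (x - A) + q (x + A)) ^ p * q (x + A) := by
              apply mul_le_mul (mul_le_mul_of_nonneg_left hmaxpow (by linarith)) h2
                (abs_nonneg _) (by positivity)
      have hab : q (x - A) + q (x + A) ≤ 2 * M * Real.exp (-(c * |x - A|)) := by
        have := hpsi_bound x hx
        have h1' : q (x - A) ≤ M * Real.exp (-(c * |x - A|)) := hq_decay' _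
        have hxA2 : |x + A| = x + A := abs_of_nonneg (by linarith)
        have h2' : q (x + A) ≤ M * Real.exp (-(c * |x - A|)) := by
          refine (hq_decay' _).trans ?_
          have hxA : |x - A| ≤ x + A := by
            rw [abs_le]; constructor <;> linarith
          have : Real.exp (-(c * |x + A|)) ≤ Real.exp (-(c * |x - A|)) := by
            apply Real.exp_le_exp.mpr
            rw [hxA2]
            nlinarith [mul_le_mul_of_nonneg_left hxA hc.le]
          nlinarith [hM.le]
        linarith
      have h5 : (q (x - A) + q (x + A)) ^ p ≤
          (2 * M) ^ p * Real.exp (-(p * c * |x - A|)) :=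
        aux_pow_decay (by positivity) hp0 (by positivity) hab
      have h6 : q (x + A) ≤ M * Real.exp (-(c * (x + A))) := by
        have := hq_decay' (x + A)
        rwa [abs_of_nonneg (by linarith : (0:ℝ) ≤ x + A)] at this
      have h7 : Real.exp (-(p * c * |x - A|)) * Real.exp (-(c * (x + A))) ≤
          Real.exp (-(2 * c * A)) * Real.exp (-((p - 1) * c * |x - A|)) := by
        rw [← Real.exp_add, ← Real.exp_add]
        apply Real.exp_le_exp.mpr
        have h8 : A - x ≤ |x - A| := by rw [abs_sub_comm]; exact le_abs_self _
        nlinarith [mul_le_mul_of_nonneg_left h8 hc.le]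
      calc |(|q (x + A) - q (x - A)| ^ (p + 1)) - q (x - A) ^ (p + 1)| ≤
          (p + 1) * (q (x - A) + q (x + A)) ^ p * q (x + A) := h4
        _ ≤ (p + 1) * ((2 * M) ^ p * Real.exp (-(p * c * |x - A|))) *
            (M * Real.exp (-(c * (x + A)))) := by
            apply mul_le_mul (mul_le_mul_of_nonneg_left h5 (by linarith)) h6 hbb.le
              (by positivity)
        _ = (p + 1) * (2 * M) ^ p * M *
            (Real.exp (-(p * c * |x - A|)) * Real.exp (-(c * (x + A)))) := by ring
        _ ≤ (p + 1) * (2 * M) ^ p * M *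
            (Real.exp (-(2 * c * A)) * Real.exp (-((p - 1) * c * |x - A|))) := by
            apply mul_le_mul_of_nonneg_left h7 (by positivity)
        _ = _ := by ring
    -- the integral of the difference
    have hdom_int : IntegrableOn (fun x => (p + 1) * (2 * M) ^ p * M *
        Real.exp (-(2 * c * A)) * Real.exp (-((p - 1) * c * |x - A|))) (Ioi 0) :=
      (((aux_exp_abs hb2).comp_sub_right A).const_mul _).integrableOn
    have exp_tail : (∫ x in Ioi (0:ℝ), Real.exp (-((p - 1) * c * |x - A|))) ≤
        ∫ x : ℝ, Real.exp (-((p - 1) * c * |x|)) := by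
      calc (∫ x in Ioi (0:ℝ), Real.exp (-((p - 1) * c * |x - A|))) ≤
          ∫ x : ℝ, Real.exp (-((p - 1) * c * |x - A|)) :=
            setIntegral_le_integral ((aux_exp_abs hb2).comp_sub_right A)
              (Filter.Eventually.of_forall fun x => (Real.exp_pos _).le)
        _ = ∫ x : ℝ, Real.exp (-((p - 1) * c * |x|)) :=
            integral_sub_right_eq_self (fun x => Real.exp (-((p - 1) * c * |x|))) A
    have hdiff : |(∫ x in Ioi (0:ℝ), |q (x + A) - q (x - A)| ^ (p + 1)) -
        ∫ x in Ioi (0:ℝ), q (x - A) ^ (p + 1)| ≤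
        (p + 1) * (2 * M) ^ p * M * Real.exp (-(2 * c * A)) *
          ∫ x : ℝ, Real.exp (-((p - 1) * c * |x|)) := by
      rw [← integral_sub hf_int hg_int]
      calc |∫ x in Ioi (0:ℝ), ((|q (x + A) - q (x - A)| ^ (p + 1)) - q (x - A) ^ (p + 1))| ≤
          ∫ x in Ioi (0:ℝ), |(|q (x + A) - q (x - A)| ^ (p + 1)) - q (x - A) ^ (p + 1)| := by
            simpa [Real.norm_eq_abs] using norm_integral_le_integral_norm
              (μ := volume.restrict (Ioi (0:ℝ)))
              (fun x => (|q (x + A) - q (x - A)| ^ (p + 1)) - q (x - A) ^ (p + 1))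
        _ ≤ ∫ x in Ioi (0:ℝ), (p + 1) * (2 * M) ^ p * M * Real.exp (-(2 * c * A)) *
              Real.exp (-((p - 1) * c * |x - A|)) :=
            setIntegral_mono_on ((hf_int.sub hg_int).abs) hdom_int measurableSet_Ioi key
        _ = (p + 1) * (2 * M) ^ p * M * Real.exp (-(2 * c * A)) *
              ∫ x in Ioi (0:ℝ), Real.exp (-((p - 1) * c * |x - A|)) := integral_const_mul _ _
        _ ≤ _ := mul_le_mul_of_nonneg_left exp_tail (by positivity)
    -- put everything together
    have hg_val : (∫ x in Ioi (0:ℝ), q (x - A) ^ (p + 1)) =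
        (∫ x : ℝ, q x ^ (p + 1)) - ∫ x in Iic (-A), q x ^ (p + 1) := by
      rw [hJtrans]; linarith
    have hexp_le : Real.exp (-((p + 1) * c * A)) ≤ Real.exp (-(2 * c * A)) := by
      apply Real.exp_le_exp.mpr
      nlinarith [hc.le]
    have hexp_eq : Real.exp (-2 * c * A) = Real.exp (-(2 * c * A)) := by
      congr 1; ring
    rw [hexp_eq]
    have htri : |(∫ x in Ioi (0:ℝ), |q (x + A) - q (x - A)| ^ (p + 1)) -
        ∫ x : ℝ, q x ^ (p + 1)| ≤
        |(∫ x in Ioi (0:ℝ), |q (x + A) - q (x - A)| ^ (p + 1)) -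
          ∫ x in Ioi (0:ℝ), q (x - A) ^ (p + 1)| +
        |(∫ x in Ioi (0:ℝ), q (x - A) ^ (p + 1)) - ∫ x : ℝ, q x ^ (p + 1)| :=
      abs_sub_le _ _ _
    have htail' : |(∫ x in Ioi (0:ℝ), q (x - A) ^ (p + 1)) - ∫ x : ℝ, q x ^ (p + 1)| ≤
        M ^ (p + 1) * (∫ x in Iic (0:ℝ), Real.exp ((p + 1) * c * x)) *
          Real.exp (-(2 * c * A)) := by
      rw [hg_val, show (∫ x : ℝ, q x ^ (p + 1)) - (∫ x in Iic (-A), q x ^ (p + 1)) -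
          ∫ x : ℝ, q x ^ (p + 1) = -(∫ x in Iic (-A), q x ^ (p + 1)) by ring, abs_neg,
        abs_of_nonneg tail_nonneg]
      calc (∫ x in Iic (-A), q x ^ (p + 1)) ≤
          M ^ (p + 1) * (Real.exp (-((p + 1) * c * A)) *
            ∫ x in Iic (0:ℝ), Real.exp ((p + 1) * c * x)) := tail_le
        _ ≤ M ^ (p + 1) * (∫ x in Iic (0:ℝ), Real.exp ((p + 1) * c * x)) *
            Real.exp (-(2 * c * A)) := by
            have hMp : (0:ℝ) ≤ M ^ (p + 1) := by positivity
            nlinarith [mul_le_mul_of_nonneg_left hexp_le hcI, Real.exp_pos (-(2 * c * A))]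
    have hE : (0:ℝ) < Real.exp (-(2 * c * A)) := Real.exp_pos _
    nlinarith [htri, hdiff, htail', hE.le]
end

section
/- Let ω > 0, q the exponentially decaying even soliton, and ψ_A(x) = q(x+A) − q(x−A) for x ≥ 0. Then for large A, ∫₀^∞ |ψ_A(x)|²/x² dx ≤ (4/A²)∫_{−∞}^∞ |q|² dx + O(e^{−√ω A}/A²). -/
open MeasureTheory Set Real Filter Topology

set_option maxHeartbeats 1000000

lemma aux_exp_abs_integrable {b : ℝ} (hb : 0 < b) :
    Integrable fun x : ℝ => Real.exp (-b * |x|) := by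
  have hIoi : IntegrableOn (fun x : ℝ => Real.exp (-b * |x|)) (Ioi 0) := by
    refine (exp_neg_integrableOn_Ioi 0 hb).congr_fun ?_ measurableSet_Ioi
    intro x hx
    simp only []
    rw [abs_of_pos hx]
  rw [← integrableOn_univ, ← @Iio_union_Ici _ _ (0 : ℝ), integrableOn_union,
    integrableOn_Ici_iff_integrableOn_Ioi]
  refine ⟨?_, hIoi⟩
  rw [← (Measure.measurePreserving_neg (volume : Measure ℝ)).integrableOn_comp_preimage
      (Homeomorph.neg ℝ).measurableEmbedding]
  simpa [Function.comp_def, abs_neg] using hIoi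

lemma aux_hasDerivAt_exp_mul (b : ℝ) (hb : b ≠ 0) (x : ℝ) :
    HasDerivAt (fun y => Real.exp (b * y) / b) (Real.exp (b * x)) x := by
  have h1 : HasDerivAt (fun y : ℝ => b * y) b x := by
    simpa using (hasDerivAt_id x).const_mul b
  have h2 := (h1.exp).div_const b
  simpa [mul_div_assoc, mul_div_cancel_right₀ _ hb] using h2

lemma aux_exp_Ioc {b : ℝ} (hb : 0 < b) {a c : ℝ} (h : a ≤ c) :
    ∫ x in Ioc a c, Real.exp (b * x) ≤ Real.exp (b * c) / b := by
  rw [← intervalIntegral.integral_of_le h,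
    intervalIntegral.integral_eq_sub_of_hasDerivAt
      (fun x _ => aux_hasDerivAt_exp_mul b hb.ne' x)
      ((Real.continuous_exp.comp (continuous_const.mul continuous_id)).intervalIntegrable a c)]
  have h1 : 0 ≤ Real.exp (b * a) / b := div_nonneg (Real.exp_pos _).le hb.le
  linarith

lemma aux_exp_Ioi {b : ℝ} (hb : 0 < b) (c : ℝ) :
    ∫ x in Ioi c, Real.exp (-b * x) = Real.exp (-b * c) / b := by
  have hd : ∀ x ∈ Ici c, HasDerivAt (fun y => -(Real.exp (-b * y) / b)) (Real.exp (-b * x)) x := by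
    intro x _
    have h0 := aux_hasDerivAt_exp_mul (-b) (neg_ne_zero.mpr hb.ne') x
    have heq : (fun y => Real.exp (-b * y) / (-b)) = fun y => -(Real.exp (-b * y) / b) := by
      funext y; rw [div_neg]
    rw [heq] at h0
    exact h0
  have hint : IntegrableOn (fun x => Real.exp (-b * x)) (Ioi c) := exp_neg_integrableOn_Ioi c hb
  have htend : Tendsto (fun y => -(Real.exp (-b * y) / b)) atTop (𝓝 0) := by
    have h1 : Tendsto (fun y : ℝ => Real.exp (-b * y)) atTop (𝓝 0) :=
      Real.tendsto_exp_atBot.comp (tendsto_id.const_mul_atTop_of_neg (neg_neg_iff_pos.2 hb))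
    simpa using (h1.div_const b).neg
  have := integral_Ioi_of_hasDerivAt_of_tendsto' hd hint htend
  rw [this]; ring

/-- **Hardy-term estimate for cut soliton differences.** Let `q` be the even, positive,
exponentially decaying soliton and `ψ_A(x) = q(x+A) − q(x−A)`. Then for large `A`,
`∫₀^∞ |ψ_A(x)|²/x² dx ≤ (4/A²)∫_ℝ |q|² dx + O(e^{−√ω A}/A²)`. -/
theorem psiA_hardy_estimate (ω : ℝ) (hω : 0 < ω)
    (q : ℝ → ℝ) (M : ℝ) (hM : 0 < M)
    (hq_even : ∀ x, q (-x) = q x) (hq_pos : ∀ x, 0 < q x)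
    (hq_smooth : ContDiff ℝ 2 q)
    (hq_decay : ∀ x, q x ≤ M * Real.exp (-(Real.sqrt ω) * |x|))
    (hq'_decay : ∀ x, |deriv q x| ≤ M * Real.exp (-(Real.sqrt ω) * |x|)) :
    ∃ C A₀ : ℝ, 0 < C ∧ 0 < A₀ ∧ ∀ A ≥ A₀,
      (∫ x in Ioi (0:ℝ), (q (x + A) - q (x - A))^2 / x^2)
        ≤ (4/A^2) * (∫ x : ℝ, (q x)^2)
          + C * Real.exp (-(Real.sqrt ω) * A) / A^2 := by
  set r := Real.sqrt ω with hrdef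
  have hr : 0 < r := Real.sqrt_pos.mpr hω
  have hqc : Continuous q := hq_smooth.continuous
  have hqd : Differentiable ℝ q := hq_smooth.differentiable (by norm_num)
  have hexp_sq : ∀ y : ℝ, Real.exp y ^ 2 = Real.exp (2 * y) := by
    intro y; rw [sq, ← Real.exp_add]; ring_nf
  -- integrability of q^2
  have hq2 : Integrable (fun x : ℝ => q x ^ 2) := by
    refine Integrable.mono'
      ((aux_exp_abs_integrable (b := 2 * r) (by positivity)).const_mul (M ^ 2))
      ((hqc.pow 2).aestronglyMeasurable) ?_
    filter_upwards with x
    rw [Real.norm_eq_abs, abs_of_nonneg (sq_nonneg _)]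
    have h1 := hq_decay x
    have h2 := (hq_pos x).le
    calc q x ^ 2 ≤ (M * Real.exp (-r * |x|)) ^ 2 := by
          apply pow_le_pow_left₀ h2 h1
      _ = M ^ 2 * Real.exp (-(2 * r) * |x|) := by
          rw [mul_pow, hexp_sq]; ring_nf
  -- choice of A₀
  have hev : ∀ᶠ A in atTop, M ^ 2 * (A ^ (3:ℝ) * Real.exp (-(r/2) * A)) < 1 := by
    have h := (tendsto_rpow_mul_exp_neg_mul_atTop_nhds_zero 3 (r/2) (by positivity)).const_mul
      (M ^ 2)
    rw [mul_zero] at h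
    exact h.eventually_lt_const one_pos
  obtain ⟨A₁, hA₁⟩ := eventually_atTop.mp hev
  refine ⟨1 + 10 * M ^ 2 / r, max A₁ 1, by positivity, by positivity, ?_⟩
  intro A hA
  have hA1 : 1 ≤ A := le_trans (le_max_right _ _) hA
  have hApos : 0 < A := lt_of_lt_of_le one_pos hA1
  have hcond : M ^ 2 * A ^ 3 * Real.exp (-(r/2) * A) ≤ 1 := by
    have h := hA₁ A (le_trans (le_max_left _ _) hA)
    rw [show ((3:ℝ)) = ((3:ℕ):ℝ) from by norm_num, Real.rpow_natCast] at h
    rw [mul_assoc]; exact h.le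
    -- the rest
  have hE : (0:ℝ) < Real.exp (-r * A) := Real.exp_pos _
  have hqsub : ∀ x, q (x - A) = q (A - x) := by
    intro x; rw [show x - A = -(A - x) by ring, hq_even]
  set f : ℝ → ℝ := fun x => (q (x + A) - q (x - A)) ^ 2 / x ^ 2 with hfdef
  have hnum : Continuous fun x : ℝ => q (x + A) - q (x - A) :=
    (hqc.comp (continuous_add_right A)).sub (hqc.comp (continuous_sub_right A))
  have hfmeas : Measurable f := (hnum.measurable.pow_const 2).div (measurable_id.pow_const 2)
  have hf0 : ∀ x, 0 ≤ f x := fun x => div_nonneg (sq_nonneg _) (sq_nonneg _)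
  -- pointwise bound on (0, A/4]
  have hbound1 : ∀ x ∈ Ioc (0:ℝ) (A/4),
      f x ≤ 4 * M ^ 2 * (Real.exp (-r * A) * Real.exp (-(r/2) * A)) := by
    rintro x ⟨hx0, hx4⟩
    have hAx : 0 < A - x := by linarith
    have hmvt : |q (x + A) - q (x - A)| ≤ M * Real.exp (-r * (A - x)) * (2 * x) := by
      rw [hqsub]
      have hmem1 : A - x ∈ Icc (A - x) (A + x) := ⟨le_refl _, by linarith⟩
      have hmem2 : A + x ∈ Icc (A - x) (A + x) := ⟨by linarith, le_refl _⟩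
      have hbd : ∀ t ∈ Icc (A - x) (A + x), ‖deriv q t‖ ≤ M * Real.exp (-r * (A - x)) := by
        intro t ht
        have ht0 : 0 ≤ t := le_trans hAx.le ht.1
        have habs : A - x ≤ |t| := by rw [abs_of_nonneg ht0]; exact ht.1
        calc ‖deriv q t‖ = |deriv q t| := rfl
          _ ≤ M * Real.exp (-r * |t|) := hq'_decay t
          _ ≤ M * Real.exp (-r * (A - x)) := by
              apply mul_le_mul_of_nonneg_left _ hM.le
              apply Real.exp_le_exp.mpr
              nlinarith
      have key := (convex_Icc (A - x) (A + x)).norm_image_sub_le_of_norm_deriv_le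
        (fun t _ => hqd t) hbd hmem1 hmem2
      have hnrm : ‖(A + x) - (A - x)‖ = 2 * x := by
        rw [Real.norm_eq_abs, abs_of_nonneg (by linarith)]; ring
      rw [hnrm] at key
      calc |q (x + A) - q (A - x)| = ‖q (A + x) - q (A - x)‖ := by
            rw [show x + A = A + x by ring]; rfl
        _ ≤ M * Real.exp (-r * (A - x)) * (2 * x) := key
    have hx2 : (0:ℝ) < x ^ 2 := by positivity
    have hsq : (q (x + A) - q (x - A)) ^ 2 ≤ (M * Real.exp (-r * (A - x)) * (2 * x)) ^ 2 := by
      rw [← sq_abs]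
      exact pow_le_pow_left₀ (abs_nonneg _) hmvt 2
    calc f x ≤ (M * Real.exp (-r * (A - x)) * (2 * x)) ^ 2 / x ^ 2 :=
          (div_le_div_iff_of_pos_right hx2).mpr hsq
      _ = 4 * M ^ 2 * Real.exp (-r * (A - x)) ^ 2 := by
          field_simp; ring
      _ = 4 * M ^ 2 * Real.exp (2 * (-r * (A - x))) := by rw [hexp_sq]
      _ ≤ 4 * M ^ 2 * (Real.exp (-r * A) * Real.exp (-(r/2) * A)) := by
          rw [← Real.exp_add]
          apply mul_le_mul_of_nonneg_left _ (by positivity)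
          apply Real.exp_le_exp.mpr
          nlinarith
  -- pointwise bound on (A/4, A/2]
  have hbound2 : ∀ x ∈ Ioc (A/4) (A/2),
      f x ≤ 16 * M ^ 2 / A ^ 2 * Real.exp (-(2*r) * A) * Real.exp ((2*r) * x) := by
    rintro x ⟨hx4, hx2⟩
    have hx0 : 0 < x := by linarith
    have hAx : 0 ≤ A - x := by linarith
    have hB : |q (x + A) - q (x - A)| ≤ M * Real.exp (-r * (A - x)) := by
      rw [hqsub]
      have h1 : q (x + A) ≤ M * Real.exp (-r * (A - x)) := by
        calc q (x + A) ≤ M * Real.exp (-r * |x + A|) := hq_decay _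
          _ ≤ M * Real.exp (-r * (A - x)) := by
              apply mul_le_mul_of_nonneg_left _ hM.le
              apply Real.exp_le_exp.mpr
              rw [abs_of_nonneg (by linarith)]
              nlinarith
      have h2 : q (A - x) ≤ M * Real.exp (-r * (A - x)) := by
        calc q (A - x) ≤ M * Real.exp (-r * |A - x|) := hq_decay _
          _ = M * Real.exp (-r * (A - x)) := by rw [abs_of_nonneg hAx]
      have h3 := hq_pos (x + A)
      have h4 := hq_pos (A - x)
      rw [abs_le]
      constructor <;> nlinarith
    have hsq : (q (x + A) - q (x - A)) ^ 2 ≤ (M * Real.exp (-r * (A - x))) ^ 2 := by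
      rw [← sq_abs]
      exact pow_le_pow_left₀ (abs_nonneg _) hB 2
    have hden : (0:ℝ) < (A/4) ^ 2 := by positivity
    have hden2 : (A/4) ^ 2 ≤ x ^ 2 := by nlinarith
    calc f x ≤ (M * Real.exp (-r * (A - x))) ^ 2 / (A/4) ^ 2 :=
          div_le_div₀ (by positivity) hsq hden hden2
      _ = 16 * M ^ 2 / A ^ 2 * Real.exp (2 * (-r * (A - x))) := by
          rw [mul_pow, hexp_sq]; field_simp; ring
      _ = 16 * M ^ 2 / A ^ 2 * Real.exp (-(2*r) * A) * Real.exp ((2*r) * x) := by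
          rw [mul_assoc, ← Real.exp_add]; ring_nf
      _ ≤ 16 * M ^ 2 / A ^ 2 * Real.exp (-(2*r) * A) * Real.exp ((2*r) * x) := le_refl _
  -- pointwise bound on (A/2, ∞)
  have hbound3 : ∀ x ∈ Ioi (A/2),
      f x ≤ 4 / A ^ 2 * (q (x + A) ^ 2 + q (x - A) ^ 2) := by
    intro x hx
    rw [mem_Ioi] at hx
    have hx0 : 0 < x := by linarith
    have hsq : (q (x + A) - q (x - A)) ^ 2 ≤ q (x + A) ^ 2 + q (x - A) ^ 2 := by
      nlinarith [mul_pos (hq_pos (x + A)) (hq_pos (x - A))]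
    have hden : (0:ℝ) < (A/2) ^ 2 := by positivity
    have hden2 : (A/2) ^ 2 ≤ x ^ 2 := by nlinarith
    calc f x ≤ (q (x + A) ^ 2 + q (x - A) ^ 2) / (A/2) ^ 2 :=
          div_le_div₀ (by positivity) hsq hden hden2
      _ = 4 / A ^ 2 * (q (x + A) ^ 2 + q (x - A) ^ 2) := by
          field_simp; ring
    -- integrability of the pieces
  have h2r : (0:ℝ) < 2 * r := by positivity
  have hg1i : IntegrableOn
      (fun _ : ℝ => 4 * M ^ 2 * (Real.exp (-r * A) * Real.exp (-(r/2) * A)))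
      (Ioc 0 (A/4)) := integrableOn_const measure_Ioc_lt_top.ne
  have hg2i : IntegrableOn
      (fun x : ℝ => 16 * M ^ 2 / A ^ 2 * Real.exp (-(2*r) * A) * Real.exp ((2*r) * x))
      (Ioc (A/4) (A/2)) := by
    apply Continuous.integrableOn_Ioc
    exact (continuous_const.mul (Real.continuous_exp.comp (continuous_const.mul continuous_id)))
  have hqpA : Integrable fun x : ℝ => q (x + A) ^ 2 := hq2.comp_add_right A
  have hqmA : Integrable fun x : ℝ => q (x - A) ^ 2 := hq2.comp_sub_right A
  have hg3i : IntegrableOn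
      (fun x : ℝ => 4 / A ^ 2 * (q (x + A) ^ 2 + q (x - A) ^ 2)) (Ioi (A/2)) :=
    (((hqpA.add hqmA).const_mul _)).integrableOn
  have hfI1 : IntegrableOn f (Ioc 0 (A/4)) := by
    refine Integrable.mono' hg1i hfmeas.aestronglyMeasurable.restrict ?_
    filter_upwards [ae_restrict_mem measurableSet_Ioc] with x hx
    rw [Real.norm_eq_abs, abs_of_nonneg (hf0 x)]
    exact hbound1 x hx
  have hfI2 : IntegrableOn f (Ioc (A/4) (A/2)) := by
    refine Integrable.mono' hg2i hfmeas.aestronglyMeasurable.restrict ?_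
    filter_upwards [ae_restrict_mem measurableSet_Ioc] with x hx
    rw [Real.norm_eq_abs, abs_of_nonneg (hf0 x)]
    exact hbound2 x hx
  have hfI3 : IntegrableOn f (Ioi (A/2)) := by
    refine Integrable.mono' hg3i hfmeas.aestronglyMeasurable.restrict ?_
    filter_upwards [ae_restrict_mem measurableSet_Ioi] with x hx
    rw [Real.norm_eq_abs, abs_of_nonneg (hf0 x)]
    exact hbound3 x hx
  have hfI12 : IntegrableOn f (Ioc 0 (A/2)) := by
    have h := hfI1.union hfI2
    rwa [Ioc_union_Ioc_eq_Ioc (by linarith) (by linarith)] at h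
  -- splitting
  have hsplit1 : ∫ x in Ioi (0:ℝ), f x
      = (∫ x in Ioc (0:ℝ) (A/2), f x) + ∫ x in Ioi (A/2), f x := by
    rw [← setIntegral_union Ioc_disjoint_Ioi_same measurableSet_Ioi hfI12 hfI3,
      Ioc_union_Ioi_eq_Ioi (by linarith : (0:ℝ) ≤ A/2)]
  have hsplit2 : ∫ x in Ioc (0:ℝ) (A/2), f x
      = (∫ x in Ioc (0:ℝ) (A/4), f x) + ∫ x in Ioc (A/4) (A/2), f x := by
    rw [← setIntegral_union (Ioc_disjoint_Ioc_of_le le_rfl) measurableSet_Ioc hfI1 hfI2,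
      Ioc_union_Ioc_eq_Ioc (by linarith) (by linarith)]
  -- piece 1
  have hP1 : ∫ x in Ioc (0:ℝ) (A/4), f x ≤ Real.exp (-r * A) / A ^ 2 := by
    have h1 := setIntegral_mono_on hfI1 hg1i measurableSet_Ioc hbound1
    rw [setIntegral_const, Real.volume_real_Ioc_of_le (by linarith : (0:ℝ) ≤ A/4), smul_eq_mul] at h1
    refine h1.trans ?_
    rw [le_div_iff₀ (by positivity)]
    have h2 := mul_le_mul_of_nonneg_right hcond hE.le
    have heq : (A/4 - 0) * (4 * M ^ 2 * (Real.exp (-r * A) * Real.exp (-(r/2) * A))) * A ^ 2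
        = M ^ 2 * A ^ 3 * Real.exp (-(r/2) * A) * Real.exp (-r * A) := by ring
    rw [heq]
    linarith
  -- piece 2
  have hP2 : ∫ x in Ioc (A/4) (A/2), f x ≤ 8 * M ^ 2 / r * Real.exp (-r * A) / A ^ 2 := by
    have h1 := setIntegral_mono_on hfI2 hg2i measurableSet_Ioc hbound2
    refine h1.trans ?_
    have h2 : ∀ x : ℝ, 16 * M ^ 2 / A ^ 2 * Real.exp (-(2*r) * A) * Real.exp ((2*r) * x)
        = (16 * M ^ 2 / A ^ 2 * Real.exp (-(2*r) * A)) * Real.exp ((2*r) * x) := fun x => rfl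
    rw [MeasureTheory.integral_const_mul (16 * M ^ 2 / A ^ 2 * Real.exp (-(2*r) * A))
      (fun x => Real.exp ((2*r) * x))]
    have h3 := aux_exp_Ioc h2r (by linarith : A/4 ≤ A/2)
    have h4 : (0:ℝ) ≤ 16 * M ^ 2 / A ^ 2 * Real.exp (-(2*r) * A) := by positivity
    calc 16 * M ^ 2 / A ^ 2 * Real.exp (-(2*r) * A) * ∫ x in Ioc (A/4) (A/2), Real.exp ((2*r) * x)
        ≤ 16 * M ^ 2 / A ^ 2 * Real.exp (-(2*r) * A) * (Real.exp ((2*r) * (A/2)) / (2*r)) :=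
          mul_le_mul_of_nonneg_left h3 h4
      _ = 8 * M ^ 2 / r * Real.exp (-r * A) / A ^ 2 := by
          have hx : Real.exp (-(2*r) * A) * Real.exp (r * A) = Real.exp (-r * A) := by
            rw [← Real.exp_add]; ring_nf
          rw [show (2*r) * (A/2) = r * A by ring, ← hx]
          field_simp
          ring
  -- piece 3
  have hT1 : ∫ x in Ioi (A/2), q (x - A) ^ 2 ≤ ∫ x : ℝ, q x ^ 2 := by
    have h := setIntegral_le_integral (s := Ioi (A/2)) hqmA
      (Eventually.of_forall fun x => sq_nonneg _)
    have h2 : (∫ x : ℝ, q (x - A) ^ 2) = ∫ x : ℝ, q x ^ 2 :=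
      MeasureTheory.integral_sub_right_eq_self (fun x => q x ^ 2) A
    exact le_trans h (le_of_eq h2)
  have hT2 : ∫ x in Ioi (A/2), q (x + A) ^ 2 ≤ M ^ 2 * Real.exp (-r * A) / (2 * r) := by
    have hpt : ∀ x ∈ Ioi (A/2), q (x + A) ^ 2
        ≤ (M ^ 2 * Real.exp (-(2*r) * A)) * Real.exp (-(2*r) * x) := by
      intro x hx
      rw [mem_Ioi] at hx
      have hx0 : 0 < x := by linarith
      calc q (x + A) ^ 2 ≤ (M * Real.exp (-r * |x + A|)) ^ 2 :=
            pow_le_pow_left₀ (hq_pos _).le (hq_decay _) 2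
        _ = (M ^ 2 * Real.exp (-(2*r) * A)) * Real.exp (-(2*r) * x) := by
            rw [abs_of_nonneg (by linarith), mul_pow, hexp_sq,
              show (M ^ 2 * Real.exp (-(2*r) * A)) * Real.exp (-(2*r) * x)
                = M ^ 2 * (Real.exp (-(2*r) * A) * Real.exp (-(2*r) * x)) from by ring,
              ← Real.exp_add]
            ring_nf
    have hmono := setIntegral_mono_on hqpA.integrableOn
      ((exp_neg_integrableOn_Ioi (A/2) h2r).const_mul (M ^ 2 * Real.exp (-(2*r) * A)))
      measurableSet_Ioi hpt
    refine hmono.trans ?_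
    rw [MeasureTheory.integral_const_mul, aux_exp_Ioi h2r (A/2),
      show -(2*r) * (A/2) = -r * A by ring]
    have hle1 : Real.exp (-(2*r) * A) ≤ 1 := Real.exp_le_one_iff.mpr (by nlinarith)
    have h5 : (0:ℝ) ≤ Real.exp (-r * A) / (2*r) := by positivity
    have h6 := mul_le_mul_of_nonneg_left (mul_le_mul_of_nonneg_right hle1 h5)
      (by positivity : (0:ℝ) ≤ M ^ 2)
    refine le_trans (le_of_eq (by ring)) (le_trans h6 (le_of_eq (by ring)))
    -- piece 3 total
  have hP3 : ∫ x in Ioi (A/2), f x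
      ≤ 4 / A ^ 2 * (∫ x : ℝ, q x ^ 2) + 2 * M ^ 2 / r * Real.exp (-r * A) / A ^ 2 := by
    have h1 := setIntegral_mono_on hfI3 hg3i measurableSet_Ioi hbound3
    refine h1.trans ?_
    rw [MeasureTheory.integral_const_mul (4 / A ^ 2) (fun x => q (x + A) ^ 2 + q (x - A) ^ 2),
      integral_add hqpA.integrableOn hqmA.integrableOn]
    have h4 : (0:ℝ) ≤ 4 / A ^ 2 := by positivity
    have h7 := mul_le_mul_of_nonneg_left (add_le_add hT2 hT1) h4
    refine le_trans h7 (le_of_eq (by ring))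
  -- conclusion
  have hCsplit : (1 + 10 * M ^ 2 / r) * Real.exp (-r * A) / A ^ 2
      = Real.exp (-r * A) / A ^ 2 + 8 * M ^ 2 / r * Real.exp (-r * A) / A ^ 2
        + 2 * M ^ 2 / r * Real.exp (-r * A) / A ^ 2 := by ring
  rw [hsplit1, hsplit2, hCsplit]
  linarith [hP1, hP2, hP3]
end

section
/- Let p ≥ 5 and suppose u(t) is a solution of the NLS on (−T_min, T_max) with conserved energy E(u(t)) = E(u₀) < 0 and satisfying the virial identities d/dt ‖xu(t)‖²_{L²} = 4 Im∫₀^∞ ū x u' dx and d²/dt² ‖xu(t)‖²_{L²} = 8Q(u(t)). Then Q(u(t)) ≤ 2E(u₀) < 0 for all t, and ‖xu(t)‖²_{L²} ≤ 8E(u₀)t² + C₁t + ‖xu₀‖²_{L²}; consequently T_min and T_max are finite (the solution blows up in finite time). -/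
open MeasureTheory Set

/-- `u ∈ H¹₀(0,∞)`, modeled as: `u` vanishes on `(-∞,0]`, is differentiable on `(0,∞)`,
and `u`, `u'` are square integrable on `(0,∞)`. -/
def H10 (u : ℝ → ℂ) : Prop :=
  (∀ x ≤ (0:ℝ), u x = 0) ∧ DifferentiableOn ℝ u (Set.Ioi 0) ∧
  MemLp u 2 (volume.restrict (Set.Ioi 0)) ∧
  MemLp (deriv u) 2 (volume.restrict (Set.Ioi 0))

/-- The Hardy functional `H(u) = ∫₀^∞ (|u'|² − c|u|²/x²)`. -/
noncomputable def Hfun (c : ℝ) (u : ℝ → ℂ) : ℝ :=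
  ∫ x in Ioi (0:ℝ), (‖deriv u x‖^2 - c * ‖u x‖^2 / x^2)

/-- `‖u‖²_{L²(0,∞)}`. -/
noncomputable def Mfun (u : ℝ → ℂ) : ℝ := ∫ x in Ioi (0:ℝ), ‖u x‖^2

/-- `‖u‖^{p+1}_{L^{p+1}(0,∞)}`. -/
noncomputable def Nfun (p : ℝ) (u : ℝ → ℂ) : ℝ := ∫ x in Ioi (0:ℝ), ‖u x‖ ^ (p+1)

/-- The action functional `S(u) = ½H(u) + (ω/2)‖u‖² − (1/(p+1))‖u‖^{p+1}_{L^{p+1}}`. -/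
noncomputable def Sfun (p ω c : ℝ) (u : ℝ → ℂ) : ℝ :=
  (1/2) * Hfun c u + (ω/2) * Mfun u - (1/(p+1)) * Nfun p u

/-- The Nehari manifold `N = {u ∈ H¹₀(0,∞)\{0} : H(u) + ω‖u‖² = ‖u‖^{p+1}_{L^{p+1}}}`. -/
def Nehari (p ω c : ℝ) : Set (ℝ → ℂ) :=
  {u | H10 u ∧ u ≠ 0 ∧ Hfun c u + ω * Mfun u = Nfun p u}


/-- The energy `E(u) = ½‖u'‖² − (c/2)‖u/x‖² − (1/(p+1))‖u‖^{p+1}_{L^{p+1}}`. -/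
noncomputable def Efun (p c : ℝ) (u : ℝ → ℂ) : ℝ :=
  (1/2) * Hfun c u - (1/(p+1)) * Nfun p u

/-- The virial functional `Q(v) = ‖v'‖² − c‖v/x‖² − ((p−1)/(2(p+1)))‖v‖^{p+1}_{L^{p+1}}`. -/
noncomputable def Qfun (p c : ℝ) (u : ℝ → ℂ) : ℝ :=
  Hfun c u - ((p-1)/(2*(p+1))) * Nfun p u

/-- **Blow-up for negative energy (`p ≥ 5`).** Let `u(t)` be a solution on the maximal
interval `(−T_min, T_max)` (endpoints in `(0,∞]`, encoded as extended reals `a < 0 < b`)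
with conserved negative energy, satisfying the virial identities
`(d/dt)‖xu(t)‖² = 4 Im ∫ ū x u' dx` and `(d²/dt²)‖xu(t)‖² = 8 Q(u(t))`. Then
`Q(u(t)) ≤ 2E(u₀) < 0`, `‖xu(t)‖² ≤ 8E(u₀)t² + C₁t + ‖xu₀‖²`, and consequently
`T_min` and `T_max` are finite: the solution blows up in finite time. -/
theorem blow_up_negative_energy (p ω c : ℝ) (hp : 5 ≤ p) (hω : 0 < ω)
    (hc : 0 < c) (hc' : c < 1/4)
    (a b : EReal) (ha : a < 0) (hb : 0 < b)
    (u : ℝ → ℝ → ℂ) (V : ℝ → ℝ)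
    (hH10 : ∀ t : ℝ, a < (t:EReal) → (t:EReal) < b → H10 (u t))
    (hV : ∀ t : ℝ, V t = ∫ x in Ioi (0:ℝ), x^2 * ‖u t x‖^2)
    (hconserved : ∀ t : ℝ, a < (t:EReal) → (t:EReal) < b → Efun p c (u t) = Efun p c (u 0))
    (hE0 : Efun p c (u 0) < 0)
    (hvirial1 : ∀ t : ℝ, a < (t:EReal) → (t:EReal) < b →
      HasDerivAt V
        (4 * ∫ x in Ioi (0:ℝ), ((starRingEnd ℂ) (u t x) * (x:ℂ) * deriv (u t) x).im) t)
    (hvirial2 : ∀ t : ℝ, a < (t:EReal) → (t:EReal) < b →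
      HasDerivAt (deriv V) (8 * Qfun p c (u t)) t) :
    (∀ t : ℝ, a < (t:EReal) → (t:EReal) < b → Qfun p c (u t) ≤ 2 * Efun p c (u 0)) ∧
    (∃ C₁ : ℝ, ∀ t : ℝ, a < (t:EReal) → (t:EReal) < b →
      V t ≤ 8 * Efun p c (u 0) * t^2 + C₁ * t + V 0) ∧
    a ≠ ⊥ ∧ b ≠ ⊤ := by
  
  have hp1 : (0:ℝ) < p + 1 := by linarith
  set E0 := Efun p c (u 0) with hE0def
  have hN : ∀ t : ℝ, 0 ≤ Nfun p (u t) := fun t =>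
    integral_nonneg fun x => Real.rpow_nonneg (norm_nonneg _) _
  have hVnn : ∀ t : ℝ, 0 ≤ V t := by
    intro t
    rw [hV t]
    exact integral_nonneg fun x => by positivity
  have hQ : ∀ t : ℝ, a < (t:EReal) → (t:EReal) < b → Qfun p c (u t) ≤ 2 * E0 := by
    intro t hat htb
    have hid : Qfun p c (u t)
        = 2 * Efun p c (u t) + ((5 - p) / (2*(p+1))) * Nfun p (u t) := by
      unfold Qfun Efun
      field_simp
      ring
    have hcoef : (5 - p) / (2*(p+1)) ≤ 0 :=
      div_nonpos_of_nonpos_of_nonneg (by linarith) (by linarith)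
    have hmul : ((5 - p) / (2*(p+1))) * Nfun p (u t) ≤ 0 :=
      mul_nonpos_of_nonpos_of_nonneg hcoef (hN t)
    rw [hid, hconserved t hat htb]
    linarith
  set S : Set ℝ := {t : ℝ | a < (t:EReal) ∧ (t:EReal) < b} with hSdef
  have hSmem : ∀ t : ℝ, t ∈ S ↔ (a < (t:EReal) ∧ (t:EReal) < b) := fun t => Iff.rfl
  have h0S : (0:ℝ) ∈ S := by
    rw [hSmem]
    constructor
    · simpa using ha
    · simpa using hb
  have hSopen : IsOpen S := by
    have he : S = ((↑) : ℝ → EReal) ⁻¹' (Ioo a b) := rfl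
    rw [he]
    exact isOpen_Ioo.preimage continuous_coe_real_ereal
  have hSconv : Convex ℝ S := by
    rw [convex_iff_ordConnected]
    refine ⟨fun x hx y hy z hz => ?_⟩
    rw [hSmem] at hx hy ⊢
    exact ⟨lt_of_lt_of_le hx.1 (EReal.coe_le_coe_iff.mpr hz.1),
      lt_of_le_of_lt (EReal.coe_le_coe_iff.mpr hz.2) hy.2⟩
  set C₁ : ℝ := deriv V 0 with hC₁
  have hVd : ∀ t ∈ S, HasDerivAt V (deriv V t) t := by
    intro t ht
    rw [hSmem] at ht
    have h1 := hvirial1 t ht.1 ht.2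
    rwa [h1.deriv]
  set W : ℝ → ℝ := fun s => deriv V s - (16*E0*s + C₁) with hWdef
  have hW : ∀ t ∈ S, HasDerivAt W (8 * Qfun p c (u t) - 16*E0) t := by
    intro t ht
    rw [hSmem] at ht
    have h2 : HasDerivAt (fun s : ℝ => 16*E0*s + C₁) (16*E0) t := by
      simpa using ((hasDerivAt_id t).const_mul (16*E0)).add_const C₁
    exact (hvirial2 t ht.1 ht.2).sub h2
  have hWanti : AntitoneOn W S := by
    apply antitoneOn_of_deriv_nonpos hSconv
    · intro t ht
      exact (hW t ht).continuousAt.continuousWithinAt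
    · intro t ht
      rw [hSopen.interior_eq] at ht
      exact (hW t ht).differentiableAt.differentiableWithinAt
    · intro t ht
      rw [hSopen.interior_eq] at ht
      rw [(hW t ht).deriv]
      have ht' := ht
      rw [hSmem] at ht'
      have := hQ t ht'.1 ht'.2
      linarith
  have hW0 : W 0 = 0 := by simp [hWdef, hC₁]
  set g : ℝ → ℝ := fun s => V s - (8*E0*s^2 + C₁*s + V 0) with hgdef
  have hg : ∀ t ∈ S, HasDerivAt g (W t) t := by
    intro t ht
    have h3 : HasDerivAt (fun s : ℝ => 8*E0*s^2 + C₁*s + V 0)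
        (8*E0*((2:ℕ)*t^(2-1)) + C₁*1) t :=
      (((hasDerivAt_pow 2 t).const_mul (8*E0)).add
        ((hasDerivAt_id t).const_mul C₁)).add_const (V 0)
    have he : 8*E0*((2:ℕ)*t^(2-1)) + C₁*1 = 16*E0*t + C₁ := by push_cast; ring
    rw [he] at h3
    exact (hVd t ht).sub h3
  have hg0 : g 0 = 0 := by simp [hgdef]
  have hbound : ∀ t ∈ S, V t ≤ 8*E0*t^2 + C₁*t + V 0 := by
    intro t ht
    have key : g t ≤ 0 := by
      rcases le_total 0 t with h0t | ht0
      · have hconv2 : Convex ℝ (S ∩ Ici 0) := hSconv.inter (convex_Ici 0)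
        have hint : interior (S ∩ Ici 0) = S ∩ Ioi 0 := by
          rw [interior_inter, hSopen.interior_eq, interior_Ici]
        have hganti : AntitoneOn g (S ∩ Ici 0) := by
          apply antitoneOn_of_deriv_nonpos hconv2
          · intro s hs
            exact (hg s hs.1).continuousAt.continuousWithinAt
          · intro s hs
            rw [hint] at hs
            exact (hg s hs.1).differentiableAt.differentiableWithinAt
          · intro s hs
            rw [hint] at hs
            rw [(hg s hs.1).deriv]
            have h5 := hWanti h0S hs.1 (le_of_lt hs.2)
            rw [hW0] at h5
            exact h5
        have h6 := hganti ⟨h0S, Set.self_mem_Ici⟩ ⟨ht, h0t⟩ h0t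
        rwa [hg0] at h6
      · have hconv2 : Convex ℝ (S ∩ Iic 0) := hSconv.inter (convex_Iic 0)
        have hint : interior (S ∩ Iic 0) = S ∩ Iio 0 := by
          rw [interior_inter, hSopen.interior_eq, interior_Iic]
        have hgmono : MonotoneOn g (S ∩ Iic 0) := by
          apply monotoneOn_of_deriv_nonneg hconv2
          · intro s hs
            exact (hg s hs.1).continuousAt.continuousWithinAt
          · intro s hs
            rw [hint] at hs
            exact (hg s hs.1).differentiableAt.differentiableWithinAt
          · intro s hs
            rw [hint] at hs
            rw [(hg s hs.1).deriv]
            have h5 := hWanti hs.1 h0S (le_of_lt hs.2)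
            rw [hW0] at h5
            exact h5
        have h6 := hgmono ⟨ht, ht0⟩ ⟨h0S, Set.self_mem_Iic⟩ ht0
        rwa [hg0] at h6
    have key' : V t - (8*E0*t^2 + C₁*t + V 0) ≤ 0 := key
    linarith
  have hE8 : 8*E0 < 0 := by linarith
  set B : ℝ := |C₁| + V 0 + 1 with hB
  set T : ℝ := max 1 (B / (-(8*E0))) with hT
  have hT1 : (1:ℝ) ≤ T := le_max_left _ _
  have hT2 : B / (-(8*E0)) ≤ T := le_max_right _ _
  have hTB : 8*E0*T ≤ -B := by
    have h8 : (0:ℝ) < -(8*E0) := by linarith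
    rw [div_le_iff₀ h8] at hT2
    nlinarith
  have hTpos : (0:ℝ) < T := by linarith
  have habs : C₁ ≤ |C₁| := le_abs_self _
  have habs' : -C₁ ≤ |C₁| := neg_le_abs _
  have hV0 : 0 ≤ V 0 := hVnn 0
  have hq1 : 8*E0*T^2 + C₁*T + V 0 < 0 := by
    nlinarith [mul_le_mul_of_nonneg_right hTB (le_of_lt hTpos),
      mul_le_mul_of_nonneg_right habs (le_of_lt hTpos)]
  have hq2 : 8*E0*T^2 + C₁*(-T) + V 0 < 0 := by
    nlinarith [mul_le_mul_of_nonneg_right hTB (le_of_lt hTpos),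
      mul_le_mul_of_nonneg_right habs' (le_of_lt hTpos)]
  refine ⟨hQ, ⟨C₁, fun t hat htb => hbound t ⟨hat, htb⟩⟩, ?_, ?_⟩
  · intro habot
    have h1 : a < ((-T : ℝ) : EReal) := by rw [habot]; exact EReal.bot_lt_coe _
    have h2 : ((-T : ℝ) : EReal) < b := by
      refine lt_trans ?_ hb
      exact_mod_cast (by linarith : (-T:ℝ) < 0)
    have h3 := hbound (-T) ⟨h1, h2⟩
    have h4 := hVnn (-T)
    nlinarith [h3, h4, hq2]
  · intro hbtop
    have h2 : ((T : ℝ) : EReal) < b := by rw [hbtop]; exact EReal.coe_lt_top _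
    have h1 : a < ((T : ℝ) : EReal) := by
      refine lt_trans ha ?_
      exact_mod_cast hTpos
    have h3 := hbound T ⟨h1, h2⟩
    have h4 := hVnn T
    linarith [hq1]
end
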